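/- Let f = a_0 + a_1 z + ... + a_m z^m, f_1, f_2 be nonconstant polynomials in ℤ[z] with f = f_1 f_2. Suppose there is a prime p and coprime natural numbers k ≥ 2 and ℓ ≤ m such that p^k divides gcd(a_0, a_1, ..., a_{ℓ-1}) and p^{k+1} does not divide a_0. If p divides f_1(0) and p divides f_2(0), then p divides a_ℓ. -/

import Mathlib

open Finset in
lemma core_val (p k ℓ u v s t : ℕ) (hp : p.Prime) (hk : 1 ≤ k)
    (a b c : ℕ → ℤ)
    (ha : ∀ n, a n = ∑ x ∈ Finset.range (n + 1), b x * c (n - x))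
    (hb0 : b 0 ≠ 0) (hc0 : c 0 ≠ 0)
    (hs : padicValInt p (b 0) = s) (ht : padicValInt p (c 0) = t)
    (hst : s + t = k)
    (hbu : ¬ (p : ℤ) ∣ b u) (hcv : ¬ (p : ℤ) ∣ c v)
    (huv : u + v = ℓ) (hu1 : 1 ≤ u) (hv1 : 1 ≤ v)
    (hdiv : ∀ i < ℓ, (p : ℤ) ^ k ∣ a i)
    (hslt : k * u < s * ℓ) : False := by
  haveI : Fact p.Prime := ⟨hp⟩
  have hbu0 : b u ≠ 0 := fun h => hbu (h ▸ dvd_zero _)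
  have hcv0 : c v ≠ 0 := fun h => hcv (h ▸ dvd_zero _)
  have hνbu : padicValInt p (b u) = 0 := padicValInt.eq_zero_of_not_dvd hbu
  have hνcv : padicValInt p (c v) = 0 := padicValInt.eq_zero_of_not_dvd hcv
  have hkey : s * ℓ + t * ℓ = k * u + k * v := by
    have : (s + t) * ℓ = k * (u + v) := by rw [hst, huv]
    linarith [add_mul s t ℓ, mul_add k u v]
  have htv : t * ℓ < k * v := by omega
  set G : ℕ → ℕ := fun x => if b x = 0 then k * ℓ + 1 else ℓ * padicValInt p (b x) + k * x with hG
  set H : ℕ → ℕ := fun y => if c y = 0 then k * ℓ + 1 else ℓ * padicValInt p (c y) + k * y with hH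
  have hGu : G u = k * u := by simp [hG, hbu0, hνbu]
  have hHv : H v = k * v := by simp [hH, hcv0, hνcv]
  have hH0 : H 0 = t * ℓ := by simp [hH, hc0, ht, mul_comm]
  have hGex : ∃ x, x ≤ u ∧ ∀ y ≤ u, G x ≤ G y := by
    obtain ⟨x, hx, hmin⟩ := Finset.exists_min_image (Finset.range (u + 1)) G ⟨u, by simp⟩
    exact ⟨x, by have := Finset.mem_range.mp hx; omega, fun y hy => hmin y (Finset.mem_range.mpr (by omega))⟩
  have hHex : ∃ y, y ≤ v ∧ ∀ z ≤ v, H y ≤ H z := by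
    obtain ⟨y, hy, hmin⟩ := Finset.exists_min_image (Finset.range (v + 1)) H ⟨v, by simp⟩
    exact ⟨y, by have := Finset.mem_range.mp hy; omega, fun z hz => hmin z (Finset.mem_range.mpr (by omega))⟩
  set i := Nat.find hGex with hi
  obtain ⟨hiu, hGmin⟩ := Nat.find_spec hGex
  have hGlt : ∀ x < i, G i < G x := by
    intro x hx
    have hnx := Nat.find_min hGex hx
    push_neg at hnx
    obtain ⟨y, hy, hlt⟩ := hnx (le_trans (le_of_lt hx) hiu)
    exact lt_of_le_of_lt (hGmin y hy) hlt
  set j := Nat.find hHex with hj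
  obtain ⟨hjv, hHmin⟩ := Nat.find_spec hHex
  have hHlt : ∀ y < j, H j < H y := by
    intro y hy
    have hny := Nat.find_min hHex hy
    push_neg at hny
    obtain ⟨z, hz, hlt⟩ := hny (le_trans (le_of_lt hy) hjv)
    exact lt_of_le_of_lt (hHmin z hz) hlt
  -- basic bounds
  have hm1 : G i ≤ k * u := hGu ▸ hGmin u le_rfl
  have hm2 : H j ≤ t * ℓ := hH0 ▸ hHmin 0 (Nat.zero_le _)
  have hkl : k * u ≤ k * ℓ := Nat.mul_le_mul_left k (by omega)
  have hvl : k * v ≤ k * ℓ := Nat.mul_le_mul_left k (by omega)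
  have hbi0 : b i ≠ 0 := by
    intro h
    have : G i = k * ℓ + 1 := by simp [hG, h]
    omega
  have hcj0 : c j ≠ 0 := by
    intro h
    have : H j = k * ℓ + 1 := by simp [hH, h]
    omega
  have hGi : G i = ℓ * padicValInt p (b i) + k * i := by simp [hG, hbi0]
  have hHj : H j = ℓ * padicValInt p (c j) + k * j := by simp [hH, hcj0]
  have hjltv : j < v := by
    rcases Nat.lt_or_ge j v with h | h
    · exact h
    · exfalso; have : j = v := le_antisymm hjv h
      rw [this, hHv] at hm2; omega
  have hij : i + j < ℓ := by omega
  set N := padicValInt p (b i) + padicValInt p (c j) with hN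
  have hNeq : ℓ * N + k * (i + j) = G i + H j := by
    rw [hGi, hHj, hN]; ring
  have hNk : N < k := by
    have h1 : ℓ * N + k * (i + j) ≤ k * u + t * ℓ := by omega
    have h2 : ℓ * N < s * ℓ + t * ℓ := by omega
    have h3 : ℓ * N < ℓ * k := by
      calc ℓ * N < s * ℓ + t * ℓ := h2
        _ = (s + t) * ℓ := (add_mul s t ℓ).symm
        _ = ℓ * k := by rw [hst, mul_comm]
    exact Nat.lt_of_mul_lt_mul_left h3
  have hdvd : (p : ℤ) ^ (N + 1) ∣ a (i + j) :=
    dvd_trans (pow_dvd_pow _ (by omega : N + 1 ≤ k)) (hdiv _ hij)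
  have hsplit : a (i + j) - b i * c j = ∑ x ∈ (Finset.range (i + j + 1)).erase i, b x * c (i + j - x) := by
    rw [ha, ← Finset.add_sum_erase _ _ (Finset.mem_range.mpr (by omega : i < i + j + 1))]
    simp
  have hrest : (p : ℤ) ^ (N + 1) ∣ a (i + j) - b i * c j := by
    rw [hsplit]
    apply Finset.dvd_sum
    intro x hx
    obtain ⟨hxi, hxr⟩ := Finset.mem_erase.mp hx
    have hxle : x ≤ i + j := by have := Finset.mem_range.mp hxr; omega
    set y := i + j - x with hy
    have hxy : x + y = i + j := by omega
    by_cases hbx : b x = 0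
    · simp [hbx]
    by_cases hcy : c y = 0
    · simp [hcy]
    have hGx : ℓ * padicValInt p (b x) + k * x = G x := by simp [hG, hbx]
    have hHy : ℓ * padicValInt p (c y) + k * y = H y := by simp [hH, hcy]
    have hkeyterm : G i + H j + 1 ≤ ℓ * padicValInt p (b x) + k * x + (ℓ * padicValInt p (c y) + k * y) := by
      rcases lt_or_gt_of_ne hxi with hlt | hgt
      · -- x < i ≤ u, y > j
        have h1 : G i < G x := hGlt x hlt
        have h2 : H j ≤ ℓ * padicValInt p (c y) + k * y := by
          rcases le_or_gt y v with hyv | hyv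
          · rw [hHy]; exact hHmin y hyv
          · have h4 : k * (v + 1) ≤ k * y := Nat.mul_le_mul_left k (by omega)
            have h5 : k * (v + 1) = k * v + k := Nat.mul_succ k v
            omega
        rw [← hGx] at *
        omega
      · -- x > i, y < j
        have hylt : y < j := by omega
        have h1 : H j < H y := hHlt y hylt
        have h2 : G i ≤ ℓ * padicValInt p (b x) + k * x := by
          rcases le_or_gt x u with hxu | hxu
          · rw [hGx]; exact hGmin x hxu
          · have h4 : k * (u + 1) ≤ k * x := Nat.mul_le_mul_left k (by omega)
            have h5 : k * (u + 1) = k * u + k := Nat.mul_succ k u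
            omega
        rw [← hHy] at *
        omega
    have hsum : N + 1 ≤ padicValInt p (b x) + padicValInt p (c y) := by
      have hma : ℓ * (padicValInt p (b x) + padicValInt p (c y))
          = ℓ * padicValInt p (b x) + ℓ * padicValInt p (c y) :=
        Nat.mul_add ℓ (padicValInt p (b x)) (padicValInt p (c y))
      have hkx : k * x + k * y = k * (i + j) := by rw [← hxy, Nat.mul_add]
      have h3 : ℓ * N < ℓ * (padicValInt p (b x) + padicValInt p (c y)) := by omega
      have := Nat.lt_of_mul_lt_mul_left h3
      omega
    calc (p : ℤ) ^ (N + 1) ∣ (p : ℤ) ^ (padicValInt p (b x) + padicValInt p (c y)) :=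
          pow_dvd_pow _ hsum
      _ = (p : ℤ) ^ padicValInt p (b x) * (p : ℤ) ^ padicValInt p (c y) := pow_add _ _ _
      _ ∣ b x * c y := mul_dvd_mul (padicValInt_dvd _) (padicValInt_dvd _)
  have hterm : (p : ℤ) ^ (N + 1) ∣ b i * c j := by
    have := dvd_sub hdvd hrest
    simpa using this
  rw [padicValInt_dvd_iff] at hterm
  rcases hterm with h | h
  · exact mul_ne_zero hbi0 hcj0 h
  · rw [padicValInt.mul hbi0 hcj0] at h
    omega

open Polynomial in
theorem stmt_6 (m : ℕ) (f f₁ f₂ : ℤ[X]) (hdeg : f.natDegree = m)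
    (hf₁ : 0 < f₁.natDegree) (hf₂ : 0 < f₂.natDegree) (hff : f = f₁ * f₂)
    (p : ℕ) (hp : p.Prime) (k ℓ : ℕ) (hk : 2 ≤ k) (hℓ : 0 < ℓ) (hℓm : ℓ ≤ m)
    (hcop : Nat.Coprime k ℓ)
    (hdiv : ∀ i < ℓ, (p : ℤ) ^ k ∣ f.coeff i)
    (hnd : ¬ (p : ℤ) ^ (k + 1) ∣ f.coeff 0)
    (h1 : (p : ℤ) ∣ f₁.eval 0) (h2 : (p : ℤ) ∣ f₂.eval 0) :
    (p : ℤ) ∣ f.coeff ℓ := by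
  haveI : Fact p.Prime := ⟨hp⟩
  subst hff
  by_contra hℓdvd
  have hpI : Prime (p : ℤ) := Nat.prime_iff_prime_int.mp hp
  rw [← Polynomial.coeff_zero_eq_eval_zero] at h1 h2
  have ha0 : (f₁ * f₂).coeff 0 ≠ 0 := fun h => hnd (h ▸ dvd_zero _)
  have hb0c0 : (f₁ * f₂).coeff 0 = f₁.coeff 0 * f₂.coeff 0 := Polynomial.mul_coeff_zero f₁ f₂
  have hb0 : f₁.coeff 0 ≠ 0 := fun h => ha0 (by rw [hb0c0, h, zero_mul])
  have hc0 : f₂.coeff 0 ≠ 0 := fun h => ha0 (by rw [hb0c0, h, mul_zero])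
  set s := padicValInt p (f₁.coeff 0) with hs
  set t := padicValInt p (f₂.coeff 0) with ht
  have hst : s + t = k := by
    have hmul : padicValInt p ((f₁ * f₂).coeff 0) = s + t := by
      rw [hb0c0, padicValInt.mul hb0 hc0]
    have hle : k ≤ padicValInt p ((f₁ * f₂).coeff 0) := by
      have := hdiv 0 hℓ
      rw [padicValInt_dvd_iff] at this
      rcases this with h | h
      · exact absurd h ha0
      · exact h
    have hlt : padicValInt p ((f₁ * f₂).coeff 0) < k + 1 := by
      by_contra hcon
      exact hnd ((padicValInt_dvd_iff _ _).mpr (Or.inr (by omega)))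
    omega
  have hs1 : 1 ≤ s := by
    rcases (padicValInt_dvd_iff 1 (f₁.coeff 0)).mp (by simpa using h1) with h | h
    · exact absurd h hb0
    · exact h
  have ht1 : 1 ≤ t := by
    rcases (padicValInt_dvd_iff 1 (f₂.coeff 0)).mp (by simpa using h2) with h | h
    · exact absurd h hc0
    · exact h
  -- existence of least non-divisible coefficients
  have hbex : ∃ x, ¬ (p : ℤ) ∣ f₁.coeff x := by
    by_contra h
    push_neg at h
    apply hℓdvd
    rw [Polynomial.coeff_mul]
    exact Finset.dvd_sum fun x _ => (h x.1).mul_right _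
  have hcex : ∃ y, ¬ (p : ℤ) ∣ f₂.coeff y := by
    by_contra h
    push_neg at h
    apply hℓdvd
    rw [Polynomial.coeff_mul]
    exact Finset.dvd_sum fun x _ => (h x.2).mul_left _
  set u := Nat.find hbex with hu
  have hbu : ¬ (p : ℤ) ∣ f₁.coeff u := Nat.find_spec hbex
  have hblt : ∀ x < u, (p : ℤ) ∣ f₁.coeff x := fun x hx => not_not.mp (Nat.find_min hbex hx)
  set v := Nat.find hcex with hv
  have hcv : ¬ (p : ℤ) ∣ f₂.coeff v := Nat.find_spec hcex
  have hclt : ∀ y < v, (p : ℤ) ∣ f₂.coeff y := fun y hy => not_not.mp (Nat.find_min hcex hy)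
  have hu1 : 1 ≤ u := by
    rcases Nat.eq_zero_or_pos u with h | h
    · exact absurd (h ▸ h1) hbu
    · exact h
  have hv1 : 1 ≤ v := by
    rcases Nat.eq_zero_or_pos v with h | h
    · exact absurd (h ▸ h2) hcv
    · exact h
  -- u + v = ℓ
  have hpuv : ¬ (p : ℤ) ∣ (f₁ * f₂).coeff (u + v) := by
    rw [Polynomial.coeff_mul]
    intro hd
    have hmem : ((u, v) : ℕ × ℕ) ∈ Finset.HasAntidiagonal.antidiagonal (u + v) := by
      simp [Finset.HasAntidiagonal.mem_antidiagonal]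
    rw [← Finset.add_sum_erase _ _ hmem] at hd
    have hrest : (p : ℤ) ∣ ∑ x ∈ (Finset.HasAntidiagonal.antidiagonal (u + v)).erase (u, v),
        f₁.coeff x.1 * f₂.coeff x.2 := by
      apply Finset.dvd_sum
      intro x hx
      obtain ⟨hne, hxm⟩ := Finset.mem_erase.mp hx
      have hsum : x.1 + x.2 = u + v := Finset.HasAntidiagonal.mem_antidiagonal.mp hxm
      rcases Nat.lt_or_ge x.1 u with h | h
      · exact (hblt x.1 h).mul_right _
      · have hx2 : x.2 < v := by
          rcases Nat.lt_or_ge x.2 v with h' | h'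
          · exact h'
          · exfalso
            have : x.1 = u ∧ x.2 = v := by omega
            exact hne (Prod.ext this.1 this.2)
        exact (hclt x.2 hx2).mul_left _
    have hbc : (p : ℤ) ∣ f₁.coeff u * f₂.coeff v := by
      have := dvd_sub hd hrest
      simpa using this
    rcases hpI.dvd_mul.mp hbc with h | h
    · exact hbu h
    · exact hcv h
  have huvℓ : u + v = ℓ := by
    rcases lt_trichotomy (u + v) ℓ with h | h | h
    · exact absurd (dvd_trans (dvd_pow_self (p : ℤ) (by omega : k ≠ 0)) (hdiv _ h)) hpuv
    · exact h
    · exfalso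
      apply hℓdvd
      rw [Polynomial.coeff_mul]
      apply Finset.dvd_sum
      intro x hx
      have hsum : x.1 + x.2 = ℓ := Finset.HasAntidiagonal.mem_antidiagonal.mp hx
      rcases Nat.lt_or_ge x.1 u with h' | h'
      · exact (hblt _ h').mul_right _
      · exact (hclt x.2 (by omega)).mul_left _
  -- the coefficient expansion
  have haexp : ∀ n, (f₁ * f₂).coeff n = ∑ x ∈ Finset.range (n + 1), f₁.coeff x * f₂.coeff (n - x) := by
    intro n
    rw [Polynomial.coeff_mul, Finset.Nat.sum_antidiagonal_eq_sum_range_succ_mk]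
  have haexp' : ∀ n, (f₁ * f₂).coeff n = ∑ x ∈ Finset.range (n + 1), f₂.coeff x * f₁.coeff (n - x) := by
    intro n
    rw [mul_comm f₁ f₂, Polynomial.coeff_mul, Finset.Nat.sum_antidiagonal_eq_sum_range_succ_mk]
  rcases lt_trichotomy (k * u) (s * ℓ) with h | h | h
  · exact core_val p k ℓ u v s t hp (by omega) (fun n => (f₁ * f₂).coeff n)
      (fun n => f₁.coeff n) (fun n => f₂.coeff n) haexp hb0 hc0 hs.symm ht.symm hst
      hbu hcv huvℓ hu1 hv1 hdiv h
  · -- equality: ℓ ∣ u, contradiction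
    have hd1 : ℓ ∣ k * u := ⟨s, by rw [h, mul_comm]⟩
    have hd2 : ℓ ∣ u := (Nat.Coprime.dvd_of_dvd_mul_left (Nat.Coprime.symm hcop) hd1)
    have := Nat.le_of_dvd (by omega) hd2
    omega
  · -- k * v < t * ℓ : apply core with roles swapped
    have hkey : s * ℓ + t * ℓ = k * u + k * v := by
      have h1 : (s + t) * ℓ = k * (u + v) := by rw [hst, huvℓ]
      linarith [add_mul s t ℓ, mul_add k u v]
    exact core_val p k ℓ v u t s hp (by omega) (fun n => (f₁ * f₂).coeff n)
      (fun n => f₂.coeff n) (fun n => f₁.coeff n) haexp' hc0 hb0 ht.symm hs.symm (by omega)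
      hcv hbu (by omega) hv1 hu1 hdiv (by omega)
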